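/- There are infinitely many three-term arithmetic progressions N, N+d, N+2d of powerful numbers with d = 2*Nat.sqrt(N) + 1 and N a perfect square. -/
import Mathlib


def Powerful (n : ℕ) : Prop :=
  0 < n ∧ ∀ p : ℕ, p.Prime → p ∣ n → p ^ 2 ∣ n

namespace Stmt5Aux

def step (p : ℕ × ℕ) : ℕ × ℕ :=
  (130576328 * p.1 + 7 * 49353213 * p.2, 49353213 * p.1 + 130576328 * p.2)

def seq (n : ℕ) : ℕ × ℕ := step^[n] (11427, 4319)

lemma seq_succ (n : ℕ) : seq (n + 1) = step (seq n) :=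
  Function.iterate_succ_apply' step n _

lemma seq_inv (n : ℕ) : (seq n).1 ^ 2 = 7 * (seq n).2 ^ 2 + 2 ∧ 7 ∣ (seq n).2 := by
  induction n with
  | zero => exact ⟨by norm_num [seq], by norm_num [seq]⟩
  | succ k ih =>
    obtain ⟨h1, h2⟩ := ih
    rw [seq_succ]
    set a := (seq k).1
    set b := (seq k).2
    constructor
    · have h1' : (a : ℤ) ^ 2 = 7 * (b : ℤ) ^ 2 + 2 := by exact_mod_cast h1
      have : ((130576328 * a + 7 * 49353213 * b : ℕ) : ℤ) ^ 2 =
          7 * ((49353213 * a + 130576328 * b : ℕ) : ℤ) ^ 2 + 2 := by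
        push_cast
        linear_combination h1'
      exact_mod_cast this
    · show 7 ∣ 49353213 * a + 130576328 * b
      exact dvd_add (Dvd.dvd.mul_right (by norm_num) a) (Dvd.dvd.mul_left h2 _)

lemma seq_fst_pos (n : ℕ) : 1 ≤ (seq n).1 := by
  have h := (seq_inv n).1
  nlinarith [h]

lemma seq_fst_lt (n : ℕ) : (seq n).1 < (seq (n + 1)).1 := by
  rw [seq_succ]
  have := seq_fst_pos n
  show (seq n).1 < 130576328 * (seq n).1 + 7 * 49353213 * (seq n).2
  nlinarith

lemma pow_sq_powerful {s : ℕ} (hs : 0 < s) : Powerful (s ^ 2) := by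
  refine ⟨by positivity, fun p hp hd => ?_⟩
  exact pow_dvd_pow_of_dvd (hp.dvd_of_dvd_pow hd) 2

end Stmt5Aux

open Stmt5Aux in
theorem stmt_5 :
    {N : ℕ | (∃ s : ℕ, N = s ^ 2) ∧ Powerful N ∧
      Powerful (N + (2 * Nat.sqrt N + 1)) ∧
      Powerful (N + 2 * (2 * Nat.sqrt N + 1))}.Infinite := by
  refine Set.infinite_of_injective_forall_mem
    (f := fun n : ℕ => ((seq n).1 - 2) ^ 2) ?_ ?_
  · -- injectivity: from strict monotonicity of (seq n).1
    have hmono : StrictMono (fun n => (seq n).1) :=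
      strictMono_nat_of_lt_succ seq_fst_lt
    have hbig : ∀ n, 3 ≤ (seq n).1 := by
      intro n
      induction n with
      | zero => norm_num [seq]
      | succ k ih => have := seq_fst_lt k; omega
    intro m n h
    have hmn : ((seq m).1 - 2) = ((seq n).1 - 2) := by
      have := Nat.pow_left_injective (by norm_num) h
      exact this
    have := hbig m; have := hbig n
    exact hmono.injective (by omega)
  · intro n
    obtain ⟨hinv, hdvd⟩ := seq_inv n
    set a := (seq n).1 with ha
    set b := (seq n).2 with hb
    have ha3 : 3 ≤ a := by
      rcases Nat.lt_or_ge a 3 with h | h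
      · interval_cases a <;> omega
      · exact h
    set s := a - 2 with hs
    have hs1 : 1 ≤ s := by omega
    have hsqrt : Nat.sqrt (s ^ 2) = s := by
      exact Nat.sqrt_eq' s
    simp only [Set.mem_setOf_eq, hsqrt]
    refine ⟨⟨s, rfl⟩, pow_sq_powerful (by omega), ?_, ?_⟩
    · have : s ^ 2 + (2 * s + 1) = (s + 1) ^ 2 := by ring
      rw [this]
      exact pow_sq_powerful (by omega)
    · obtain ⟨c, hc⟩ := hdvd
      have hb1 : 1 ≤ b := by
        rcases Nat.eq_zero_or_pos b with h | h
        · rw [h] at hinv; nlinarith [hinv, ha3]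
        · exact h
      have hc1 : 1 ≤ c := by omega
      have key : s ^ 2 + 2 * (2 * s + 1) = 343 * c ^ 2 := by
        have : s ^ 2 + 2 * (2 * s + 1) = a ^ 2 - 2 := by
          have : a = s + 2 := by omega
          rw [this]; ring_nf; omega
        rw [this, hinv, hc]; ring_nf; omega
      rw [key]
      refine ⟨by positivity, fun p hp hd => ?_⟩
      have h7 : (343 : ℕ) = 7 ^ 3 := by norm_num
      rw [h7] at hd ⊢
      rcases (Nat.Prime.dvd_mul hp).mp hd with h | h
      · have hp7 : p = 7 := by
          have := Nat.Prime.dvd_of_dvd_pow hp h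
          exact (Nat.prime_dvd_prime_iff_eq hp (by norm_num)).mp this
        subst hp7
        exact Dvd.dvd.mul_right (pow_dvd_pow 7 (by norm_num)) _
      · exact Dvd.dvd.mul_left (pow_dvd_pow_of_dvd (hp.dvd_of_dvd_pow h) 2) _
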